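/- Let λ, μ be partitions with |λ|, |μ| ≤ n. Define ρ(δ) = (δ, -1, -2, ..., -n) and λ̂ = (-|λ|, λ_1, ..., λ_n). Then λ̂ + ρ(δ) and μ̂ + ρ(δ) are equal as multisets modulo p if and only if Γ_δ(λ,b) = Γ_δ(μ,b) for any b ≥ max(|λ|,|μ|), where Γ_δ is the runner-count vector of the δ-marked abacus. -/
import Mathlib


/-- A partition: a weakly decreasing, finitely supported sequence of non-negative integers.
`parts i` is the `(i+1)`-st part `λ_{i+1}` (rows are 0-indexed in Lean). -/
structure Partn where
  parts : ℕ → ℕ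
  antitone : Antitone parts
  finite_support : (Function.support parts).Finite

/-- The size `|λ|` of a partition. -/
noncomputable def Partn.size (l : Partn) : ℕ := ∑ᶠ i, l.parts i

/-- `Γ(λ,b)_i`: the number of beads of the abacus of `λ` with `b` beads and `p` runners
lying on runner `i`; bead `j` (for `j = 0, …, b-1`) sits in position
`β(λ,b)_j = λ_{j+1} - (j+1) + b`. -/
def Gamma (p : ℕ) (l : Partn) (b : ℕ) (i : ℕ) : ℕ :=
  (Finset.univ.filter fun j : Fin b => (l.parts j + (b - (j + 1))) % p = i).card

/-- The runner-count vector `Γ_δ(λ,b)` of the `δ`-marked abacus: the bead counts `Γ(λ,b)`,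
with an extra `1` added on the marked runner `v_λ ≡ δ - |λ| + b (mod p)`. -/
noncomputable def GammaDelta (p : ℕ) (δ : ℤ) (l : Partn) (b : ℕ) (i : ℕ) : ℕ :=
  Gamma p l b i + if (δ - (l.size : ℤ) + b) % p = i then 1 else 0

/-- The multiset of entries of `λ̂ + ρ(δ) = (δ - |λ|, λ_1 - 1, …, λ_n - n)`, reduced mod `p`. -/
noncomputable def hatRhoModP (p : ℕ) (δ : ℤ) (n : ℕ) (l : Partn) : Multiset (ZMod p) :=
  ((δ - (l.size : ℤ) : ℤ) : ZMod p) ::ₘ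
    (Multiset.range n).map fun i => (((l.parts i : ℤ) - (i + 1) : ℤ) : ZMod p)

/-! ### Auxiliary lemmas -/

lemma partn_parts_eq_zero (l : Partn) {i : ℕ} (h : l.size ≤ i) : l.parts i = 0 := by
  by_contra h0
  have hi : 1 ≤ l.parts i := Nat.one_le_iff_ne_zero.mpr h0
  classical
  set s := l.finite_support.toFinset ∪ Finset.range (i+1) with hs
  have hsub : Function.support l.parts ⊆ ↑s := by
    intro x hx
    simp only [hs, Finset.coe_union, Set.mem_union, Finset.coe_range, Set.Finite.coe_toFinset]
    exact Or.inl hx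
  have hsz : l.size = ∑ j ∈ s, l.parts j :=
    finsum_eq_sum_of_support_subset _ hsub
  have h1 : i + 1 ≤ ∑ j ∈ Finset.range (i+1), l.parts j := by
    calc i + 1 = ∑ _j ∈ Finset.range (i+1), 1 := by simp
    _ ≤ _ := Finset.sum_le_sum fun j hj =>
        hi.trans (l.antitone (Nat.lt_succ_iff.mp (Finset.mem_range.mp hj)))
  have h2 : ∑ j ∈ Finset.range (i+1), l.parts j ≤ ∑ j ∈ s, l.parts j :=
    Finset.sum_le_sum_of_subset Finset.subset_union_right
  have := h
  rw [Partn.size] at this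
  omega

/-- The tail of the `β`-multiset (mod `p`) with `k` entries. -/
noncomputable def Tm (p k : ℕ) (l : Partn) : Multiset (ZMod p) :=
  (Multiset.range k).map fun j => (((l.parts j : ℤ) - (j + 1) : ℤ) : ZMod p)

lemma Tm_add {p : ℕ} (l : Partn) {k : ℕ} (h : l.size ≤ k) (d : ℕ) :
    Tm p (k + d) l = Tm p k l +
      (Multiset.range d).map fun j : ℕ => ((-((k + j + 1 : ℕ) : ℤ) : ℤ) : ZMod p) := by
  unfold Tm
  rw [Multiset.range_add, Multiset.map_add, Multiset.map_map]
  congr 1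
  apply Multiset.map_congr rfl
  intro j _
  have h0 : l.parts (k + j) = 0 := partn_parts_eq_zero l (h.trans (Nat.le_add_right _ _))
  simp only [Function.comp_apply, h0]
  push_cast
  ring_nf

lemma cons_Tm_eq_iff {p : ℕ} (l m : Partn) (a a' : ZMod p) {k K : ℕ}
    (hl : l.size ≤ k) (hm : m.size ≤ k) (hk : k ≤ K) :
    (a ::ₘ Tm p k l = a' ::ₘ Tm p k m) ↔ (a ::ₘ Tm p K l = a' ::ₘ Tm p K m) := by
  obtain ⟨d, rfl⟩ := Nat.exists_eq_add_of_le hk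
  rw [Tm_add l hl d, Tm_add m hm d, ← Multiset.cons_add, ← Multiset.cons_add]
  exact (add_left_inj _).symm

lemma natmod {p i : ℕ} (hi : i < p) (x : ℕ) :
    ((i : ZMod p) = (x : ZMod p)) ↔ x % p = i := by
  rw [ZMod.natCast_eq_natCast_iff, Nat.ModEq, Nat.mod_eq_of_lt hi]
  exact eq_comm

lemma intmod {p i : ℕ} (hi : i < p) (x : ℤ) :
    (((i : ℕ) : ZMod p) = (x : ZMod p)) ↔ x % p = i := by
  rw [show ((i : ℕ) : ZMod p) = ((i : ℤ) : ZMod p) by push_cast; rfl,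
    ZMod.intCast_eq_intCast_iff', Int.emod_eq_of_lt (by positivity) (by exact_mod_cast hi)]
  exact eq_comm

lemma count_shifted {p : ℕ} (δ : ℤ) (l : Partn) (b : ℕ) {i : ℕ} (hi : i < p) :
    Multiset.count (i : ZMod p)
      ((((δ - (l.size : ℤ) + b : ℤ)) : ZMod p) ::ₘ
        (Multiset.range b).map fun j => ((l.parts j + (b - (j + 1)) : ℕ) : ZMod p))
      = GammaDelta p δ l b i := by
  classical
  rw [Multiset.count_cons, Multiset.count_map, GammaDelta]
  congr 1
  · have h1 : Multiset.filter (fun a => (i : ZMod p) = ((l.parts a + (b - (a + 1)) : ℕ) : ZMod p))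
        (Multiset.range b)
        = ((Finset.range b).filter
            (fun a => (i : ZMod p) = ((l.parts a + (b - (a + 1)) : ℕ) : ZMod p))).val := rfl
    rw [h1]
    show ((Finset.range b).filter _).card = _
    rw [Finset.card_filter, Gamma, Finset.card_filter,
      Fin.sum_univ_eq_sum_range (fun j => if (l.parts j + (b - (j + 1))) % p = i then 1 else 0) b]
    apply Finset.sum_congr rfl
    intro j _
    rw [if_congr (natmod hi _) rfl rfl]
  · exact if_congr (intmod hi _) rfl rfl

/-- For partitions `λ, μ` with `|λ|, |μ| ≤ n`, the tuples `λ̂ + ρ(δ)` and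
`μ̂ + ρ(δ)` are equal as multisets modulo `p` if and only if the `δ`-marked abacus
runner-counts agree: `Γ_δ(λ,b) = Γ_δ(μ,b)`, for any `b ≥ max(|λ|,|μ|)`. -/
theorem hatRho_multiset_eq_iff_GammaDelta_eq
    (p : ℕ) (hp : p.Prime) (δ : ℤ) (n : ℕ) (l m : Partn)
    (hl : l.size ≤ n) (hm : m.size ≤ n) :
    ∀ b, max l.size m.size ≤ b →
      (hatRhoModP p δ n l = hatRhoModP p δ n m ↔
        ∀ i, i < p → GammaDelta p δ l b i = GammaDelta p δ m b i) := by
  intro b hb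
  haveI : NeZero p := ⟨hp.ne_zero⟩
  have hlb : l.size ≤ b := le_trans (le_max_left _ _) hb
  have hmb : m.size ≤ b := le_trans (le_max_right _ _) hb
  set a : ZMod p := ((δ - (l.size : ℤ) : ℤ) : ZMod p) with ha
  set a' : ZMod p := ((δ - (m.size : ℤ) : ℤ) : ZMod p) with ha'
  have step1 : (hatRhoModP p δ n l = hatRhoModP p δ n m) ↔
      (a ::ₘ Tm p b l = a' ::ₘ Tm p b m) := by
    rw [hatRhoModP, hatRhoModP]
    exact (cons_Tm_eq_iff l m a a' hl hm (le_max_left n b)).trans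
      (cons_Tm_eq_iff l m a a' hlb hmb (le_max_right n b)).symm
  have hshift : ∀ (q : Partn),
      ((((δ - (q.size : ℤ) + b : ℤ)) : ZMod p) ::ₘ
        (Multiset.range b).map fun j => ((q.parts j + (b - (j + 1)) : ℕ) : ZMod p))
      = Multiset.map (· + (b : ZMod p))
          ((((δ - (q.size : ℤ) : ℤ)) : ZMod p) ::ₘ Tm p b q) := by
    intro q
    rw [Multiset.map_cons]
    congr 1
    · push_cast; ring
    · rw [Tm, Multiset.map_map]
      symm
      apply Multiset.map_congr rfl
      intro j hj
      have hjb : j + 1 ≤ b := Multiset.mem_range.mp hj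
      simp only [Function.comp_apply]
      rw [show ((q.parts j + (b - (j + 1)) : ℕ) : ZMod p)
          = (((q.parts j + (b - (j + 1)) : ℕ) : ℤ) : ZMod p) by push_cast; rfl]
      rw [show ((q.parts j + (b - (j + 1)) : ℕ) : ℤ)
          = (q.parts j : ℤ) + b - (j + 1) by push_cast [hjb]; ring]
      push_cast
      ring
  have step2 : (a ::ₘ Tm p b l = a' ::ₘ Tm p b m) ↔
      ((((δ - (l.size : ℤ) + b : ℤ)) : ZMod p) ::ₘ
        (Multiset.range b).map (fun j => ((l.parts j + (b - (j + 1)) : ℕ) : ZMod p)))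
      = ((((δ - (m.size : ℤ) + b : ℤ)) : ZMod p) ::ₘ
        (Multiset.range b).map fun j => ((m.parts j + (b - (j + 1)) : ℕ) : ZMod p)) := by
    rw [hshift l, hshift m, ha, ha']
    constructor
    · intro h; rw [h]
    · intro h; exact Multiset.map_injective (add_left_injective _) h
  rw [step1, step2]
  constructor
  · intro h i hi
    rw [← count_shifted δ l b hi, ← count_shifted δ m b hi, h]
  · intro h
    ext x
    have hx : x.val < p := ZMod.val_lt x
    have hxx : ((x.val : ℕ) : ZMod p) = x := ZMod.natCast_rightInverse x
    rw [← hxx, count_shifted δ l b hx, count_shifted δ m b hx]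
    exact h x.val hx
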